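/- Assume A := ∫_G c(g)^{1/2} δ_λ(g)² dπ(g) < 1 and ∫_G δ_λ(g)² dπ(g) < ∞, let ν be a Q-invariant probability measure with ν(p_λ²) < ∞, and suppose the norms ‖·‖₁ = m₁ + |·|₁ and ‖·‖_ν := m₁ + ν(|·|) are equivalent on L₁. Then there exist t₀ > 0, κ < 1 and C' ≥ 0 such that for every t with |t| ≤ t₀, every integer n ≥ 1 and every f ∈ L₁: m₁(Q(t)^n f) + ν(|Q(t)^n f|) ≤ κ^n (m₁(f) + ν(|f|)) + C' ν(|f|). -/

import Mathlib

open MeasureTheory ENNReal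

lemma exp_I_diff_le (u v : ℝ) :
    ‖Complex.exp (Complex.I * u) - Complex.exp (Complex.I * v)‖ ≤ 2 * Real.sqrt |u - v| := by
  have h1 : Complex.exp (Complex.I * u) - Complex.exp (Complex.I * v)
      = Complex.exp (Complex.I * v) * (Complex.exp (Complex.I * (u - v)) - 1) := by
    rw [mul_sub, ← Complex.exp_add]; ring_nf
  rw [h1, norm_mul]
  have hv : ‖Complex.exp (Complex.I * (v:ℂ))‖ = 1 := by
    rw [mul_comm, Complex.norm_exp_ofReal_mul_I]
  rw [hv, one_mul]
  have habs : ‖Complex.I * ((u:ℂ) - v)‖ = |u - v| := by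
    rw [norm_mul, Complex.norm_I, one_mul]
    rw [← Complex.ofReal_sub, Complex.norm_real, Real.norm_eq_abs]
  by_cases h : |u - v| ≤ 1
  · have := Complex.norm_exp_sub_one_le (x := Complex.I * ((u:ℂ) - v)) (by rw [habs]; exact h)
    rw [habs] at this
    have h2 : |u - v| ≤ Real.sqrt |u - v| := by
      nlinarith [Real.sq_sqrt (abs_nonneg (u-v)), Real.sqrt_nonneg (u-v) , Real.sqrt_nonneg |u-v|]
    calc ‖Complex.exp (Complex.I * ((u:ℂ) - v)) - 1‖ = ‖Complex.exp (Complex.I * ((u:ℂ) - v)) - 1‖ := rfl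
      _ ≤ 2 * |u - v| := this
      _ ≤ 2 * Real.sqrt |u - v| := by linarith
  · push_neg at h
    have h2 : (1:ℝ) ≤ Real.sqrt |u - v| := by
      rw [show (1:ℝ) = Real.sqrt 1 by simp]
      exact Real.sqrt_le_sqrt h.le
    have h3 : ‖Complex.exp (Complex.I * ((u:ℂ) - v)) - 1‖ ≤ 2 := by
      calc ‖Complex.exp (Complex.I * ((u:ℂ) - v)) - 1‖
          ≤ ‖Complex.exp (Complex.I * ((u:ℂ) - v))‖ + ‖(1:ℂ)‖ := norm_sub_le _ _
        _ ≤ 2 := by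
            have : ‖Complex.exp (Complex.I * ((u:ℂ) - v))‖ = 1 := by
              rw [mul_comm, ← Complex.ofReal_sub, Complex.norm_exp_ofReal_mul_I]
            rw [this, norm_one]; norm_num
    linarith

lemma exp_mul_diff_le (u v : ℝ) (a b : ℂ) :
    ‖Complex.exp (Complex.I * u) * a - Complex.exp (Complex.I * v) * b‖
      ≤ ‖a - b‖ + 2 * Real.sqrt |u - v| * min ‖a‖ ‖b‖ := by
  have hu : ‖Complex.exp (Complex.I * (u:ℂ))‖ = 1 := by
    rw [mul_comm, Complex.norm_exp_ofReal_mul_I]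
  have hv : ‖Complex.exp (Complex.I * (v:ℂ))‖ = 1 := by
    rw [mul_comm, Complex.norm_exp_ofReal_mul_I]
  have he := exp_I_diff_le u v
  rcases min_cases ‖a‖ ‖b‖ with ⟨hm, _⟩ | ⟨hm, _⟩
  · have h1 : Complex.exp (Complex.I * u) * a - Complex.exp (Complex.I * v) * b
        = (Complex.exp (Complex.I * u) - Complex.exp (Complex.I * v)) * a
          + Complex.exp (Complex.I * v) * (a - b) := by ring
    rw [h1]
    calc _ ≤ ‖(Complex.exp (Complex.I * u) - Complex.exp (Complex.I * v)) * a‖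
            + ‖Complex.exp (Complex.I * (v:ℂ)) * (a - b)‖ := norm_add_le _ _
      _ = ‖Complex.exp (Complex.I * u) - Complex.exp (Complex.I * v)‖ * ‖a‖ + ‖a - b‖ := by
          rw [norm_mul, norm_mul, hv, one_mul]
      _ ≤ ‖a - b‖ + 2 * Real.sqrt |u - v| * min ‖a‖ ‖b‖ := by
          rw [hm]; nlinarith [norm_nonneg a]
  · have h1 : Complex.exp (Complex.I * u) * a - Complex.exp (Complex.I * v) * b
        = Complex.exp (Complex.I * u) * (a - b)
          + (Complex.exp (Complex.I * u) - Complex.exp (Complex.I * v)) * b := by ring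
    rw [h1]
    calc _ ≤ ‖Complex.exp (Complex.I * (u:ℂ)) * (a - b)‖
            + ‖(Complex.exp (Complex.I * u) - Complex.exp (Complex.I * v)) * b‖ := norm_add_le _ _
      _ = ‖a - b‖ + ‖Complex.exp (Complex.I * u) - Complex.exp (Complex.I * v)‖ * ‖b‖ := by
          rw [norm_mul, norm_mul, hu, one_mul]
      _ ≤ ‖a - b‖ + 2 * Real.sqrt |u - v| * min ‖a‖ ‖b‖ := by
          rw [hm]; nlinarith [norm_nonneg b]

lemma sqrt_add_le' {a b : ℝ} (ha : 0 ≤ a) (hb : 0 ≤ b) :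
    Real.sqrt (a + b) ≤ Real.sqrt a + Real.sqrt b := by
  nlinarith [Real.sq_sqrt ha, Real.sq_sqrt hb, Real.sq_sqrt (add_nonneg ha hb),
    Real.sqrt_nonneg a, Real.sqrt_nonneg b, Real.sqrt_nonneg (a+b)]

set_option maxHeartbeats 2000000 in
/-- Lemma 3.2 of the paper (second part): the uniform Doeblin–Fortet inequality (H4),
`m₁(Q(t)ⁿf) + ν(|Q(t)ⁿf|) ≤ κⁿ (m₁(f) + ν(|f|)) + C' ν(|f|)` for `|t| ≤ t₀`. -/
theorem stmt_12
    {E : Type*} [MetricSpace E] [MeasurableSpace E] [BorelSpace E]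
    (hballs : ∀ (x : E) (r : ℝ), IsCompact (Metric.closedBall x r))
    (x₀ : E)
    -- the Lipschitz transformations of `E`
    {G : Type*} [MeasurableSpace G]
    (act : G → E → E) (hact : Measurable fun p : G × E => act p.1 p.2)
    (c : G → ℝ) (hc0 : ∀ g, 0 ≤ c g)
    (hcLip : ∀ g x y, dist (act g x) (act g y) ≤ c g * dist x y)
    (hcLeast : ∀ g r, 0 ≤ r → (∀ x y, dist (act g x) (act g y) ≤ r * dist x y) → c g ≤ r)
    (π : Measure G) [IsProbabilityMeasure π]
    -- the Lipschitz function `ξ` and the Fourier kernels `Q(t)`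
    (ξ : E → ℝ) (C : ℝ) (hC : 0 ≤ C) (hξLip : ∀ x y, |ξ x - ξ y| ≤ C * dist x y)
    (Qt : ℝ → (E → ℂ) → E → ℂ)
    (hQt : ∀ t f x, Qt t f x = ∫ g, Complex.exp (Complex.I * t * ξ (act g x)) * f (act g x) ∂π)
    -- the weights `p_λ` and `δ_λ`
    (lam : ℝ) (hlam0 : 0 < lam) (hlam1 : lam ≤ 1)
    (pl : E → ℝ) (hpl : ∀ x, pl x = 1 + lam * Real.sqrt (dist x x₀))
    (δ : G → ℝ) (hδ : ∀ g, δ g = Real.sqrt (max (c g) 1) + lam * Real.sqrt (dist (act g x₀) x₀))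
    -- the seminorms `m₁`, `|·|₁` and `ν(|·|)`
    (ν : Measure E) [IsProbabilityMeasure ν]
    (hinv : ν.bind (fun x => π.map (fun g => act g x)) = ν)
    (hνpl : Integrable (fun x => pl x ^ 2) ν)
    (m1 : (E → ℂ) → ℝ≥0∞)
    (hm1 : ∀ f, m1 f = ⨆ (x : E) (y : E),
      (‖f x - f y‖₊ : ℝ≥0∞) / ENNReal.ofReal (Real.sqrt (dist x y) * pl x * pl y))
    (i1 : (E → ℂ) → ℝ≥0∞)
    (hi1 : ∀ f, i1 f = ⨆ x : E, (‖f x‖₊ : ℝ≥0∞) / ENNReal.ofReal (pl x ^ 2))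
    (νn : (E → ℂ) → ℝ≥0∞) (hνn : ∀ f, νn f = ∫⁻ x, ‖f x‖₊ ∂ν)
    -- the hypotheses: `A < 1`, `B < ∞`, equivalence of `‖·‖₁` and `‖·‖_ν` on `L₁`
    (hAint : Integrable (fun g => Real.sqrt (c g) * δ g ^ 2) π)
    (hA1 : (∫ g, Real.sqrt (c g) * δ g ^ 2 ∂π) < 1)
    (hBint : Integrable (fun g => δ g ^ 2) π)
    (hequiv : ∃ c₁ c₂ : ℝ, 0 < c₁ ∧ 0 < c₂ ∧ ∀ f : E → ℂ,
      m1 f ≠ ⊤ → i1 f ≠ ⊤ →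
      ENNReal.ofReal c₁ * (m1 f + i1 f) ≤ m1 f + νn f ∧
      m1 f + νn f ≤ ENNReal.ofReal c₂ * (m1 f + i1 f)) :
    ∃ t₀ > (0 : ℝ), ∃ κ : ℝ, 0 ≤ κ ∧ κ < 1 ∧ ∃ C' : ℝ, 0 ≤ C' ∧
      ∀ t : ℝ, |t| ≤ t₀ → ∀ n : ℕ, 1 ≤ n → ∀ f : E → ℂ,
        m1 f ≠ ⊤ → i1 f ≠ ⊤ →
        m1 ((Qt t)^[n] f) + νn ((Qt t)^[n] f)
          ≤ ENNReal.ofReal κ ^ n * (m1 f + νn f) + ENNReal.ofReal C' * νn f := by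
  obtain ⟨c₁, c₂, hc₁, hc₂, hEq⟩ := hequiv
  set A : ℝ := ∫ g, Real.sqrt (c g) * δ g ^ 2 ∂π with hA
  set B : ℝ := ∫ g, δ g ^ 2 ∂π with hB
  have hA0 : 0 ≤ A := integral_nonneg fun g => mul_nonneg (Real.sqrt_nonneg _) (sq_nonneg _)
  set ε₀ : ℝ := c₁ * (1 - A) / (2 * (A + 1)) with hε₀
  have hε₀pos : 0 < ε₀ := by
    apply div_pos (mul_pos hc₁ (by linarith)) (by linarith)
  set t₀ : ℝ := ε₀ ^ 2 / (4 * (C + 1)) with ht₀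
  have ht₀pos : 0 < t₀ := by positivity
  set κ : ℝ := (1 + A) / 2 with hκ
  have hκ0 : 0 ≤ κ := by positivity
  have hκ1 : κ < 1 := by rw [hκ]; linarith
  set C₂ : ℝ := κ / (1 - κ) with hC₂
  have hC₂0 : 0 ≤ C₂ := div_nonneg hκ0 (by linarith)
  refine ⟨t₀, ht₀pos, κ, hκ0, hκ1, C₂ + 1, by linarith, ?_⟩
  -- basic facts about pl and δ
  have hpl1 : ∀ x : E, 1 ≤ pl x := by
    intro x; rw [hpl]
    nlinarith [Real.sqrt_nonneg (dist x x₀), hlam0]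
  have hpl0 : ∀ x : E, 0 < pl x := fun x => lt_of_lt_of_le one_pos (hpl1 x)
  have hδ1 : ∀ g : G, 1 ≤ δ g := by
    intro g; rw [hδ]
    have h1 : (1:ℝ) = Real.sqrt 1 := by simp
    nlinarith [Real.sqrt_le_sqrt (le_max_right (c g) 1), Real.sqrt_one,
      Real.sqrt_nonneg (dist (act g x₀) x₀), hlam0]
  have hδ0 : ∀ g : G, 0 ≤ δ g := fun g => le_trans zero_le_one (hδ1 g)
  have hplδ : ∀ g x, pl (act g x) ≤ δ g * pl x := by
    intro g x
    have hd : dist (act g x) x₀ ≤ c g * dist x x₀ + dist (act g x₀) x₀ := by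
      calc dist (act g x) x₀ ≤ dist (act g x) (act g x₀) + dist (act g x₀) x₀ :=
            dist_triangle _ _ _
        _ ≤ c g * dist x x₀ + dist (act g x₀) x₀ := by linarith [hcLip g x x₀]
    have h1 : Real.sqrt (dist (act g x) x₀)
        ≤ Real.sqrt (c g) * Real.sqrt (dist x x₀) + Real.sqrt (dist (act g x₀) x₀) := by
      calc Real.sqrt (dist (act g x) x₀)
          ≤ Real.sqrt (c g * dist x x₀ + dist (act g x₀) x₀) := Real.sqrt_le_sqrt hd
        _ ≤ Real.sqrt (c g * dist x x₀) + Real.sqrt (dist (act g x₀) x₀) :=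
            sqrt_add_le' (mul_nonneg (hc0 g) dist_nonneg) dist_nonneg
        _ = _ := by rw [Real.sqrt_mul (hc0 g)]
    have h2 : Real.sqrt (c g) ≤ Real.sqrt (max (c g) 1) := Real.sqrt_le_sqrt (le_max_left _ _)
    have h3 : (1:ℝ) ≤ Real.sqrt (max (c g) 1) := by
      have := Real.sqrt_le_sqrt (le_max_right (c g) 1)
      rwa [Real.sqrt_one] at this
    rw [hpl, hpl, hδ]
    nlinarith [Real.sqrt_nonneg (dist x x₀), Real.sqrt_nonneg (dist (act g x₀) x₀),
      Real.sqrt_nonneg (c g), hlam0.le,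
      mul_le_mul_of_nonneg_left h1 hlam0.le,
      mul_nonneg (mul_nonneg hlam0.le (Real.sqrt_nonneg (dist x x₀))) (sub_nonneg.2 h2),
      mul_nonneg (mul_nonneg hlam0.le hlam0.le)
        (mul_nonneg (Real.sqrt_nonneg (dist (act g x₀) x₀)) (Real.sqrt_nonneg (dist x x₀)))]
  -- measurability of the action sections
  have hmact : ∀ x : E, Measurable fun g => act g x := fun x =>
    hact.comp (measurable_id.prodMk measurable_const)
  -- extraction of pointwise bounds from `m1` and `i1`
  have hm1le : ∀ h : E → ℂ, m1 h ≠ ⊤ → ∀ x y : E,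
      ‖h x - h y‖ ≤ (m1 h).toReal * (Real.sqrt (dist x y) * pl x * pl y) := by
    intro h hfin x y
    by_cases hxy : x = y
    · subst hxy; simp
    · have hD : 0 < Real.sqrt (dist x y) * pl x * pl y :=
        mul_pos (mul_pos (Real.sqrt_pos.2 (dist_pos.2 hxy)) (hpl0 x)) (hpl0 y)
      have h1 : (‖h x - h y‖₊ : ℝ≥0∞)
          / ENNReal.ofReal (Real.sqrt (dist x y) * pl x * pl y) ≤ m1 h := by
        rw [hm1]
        exact le_iSup₂ (f := fun x y : E => (‖h x - h y‖₊ : ℝ≥0∞)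
          / ENNReal.ofReal (Real.sqrt (dist x y) * pl x * pl y)) x y
      rw [ENNReal.div_le_iff_le_mul (Or.inl (ENNReal.ofReal_pos.2 hD).ne')
        (Or.inl ENNReal.ofReal_ne_top)] at h1
      have h2 := ENNReal.toReal_mono (ENNReal.mul_ne_top hfin ENNReal.ofReal_ne_top) h1
      rwa [ENNReal.toReal_mul, ENNReal.toReal_ofReal hD.le, ENNReal.coe_toReal, coe_nnnorm]
        at h2
  have hi1le : ∀ h : E → ℂ, i1 h ≠ ⊤ → ∀ x : E, ‖h x‖ ≤ (i1 h).toReal * pl x ^ 2 := by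
    intro h hfin x
    have hD : (0:ℝ) < pl x ^ 2 := pow_pos (hpl0 x) 2
    have h1 : (‖h x‖₊ : ℝ≥0∞) / ENNReal.ofReal (pl x ^ 2) ≤ i1 h := by
      rw [hi1]
      exact le_iSup (f := fun x : E => (‖h x‖₊ : ℝ≥0∞) / ENNReal.ofReal (pl x ^ 2)) x
    rw [ENNReal.div_le_iff_le_mul (Or.inl (ENNReal.ofReal_pos.2 hD).ne')
      (Or.inl ENNReal.ofReal_ne_top)] at h1
    have h2 := ENNReal.toReal_mono (ENNReal.mul_ne_top hfin ENNReal.ofReal_ne_top) h1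
    rwa [ENNReal.toReal_mul, ENNReal.toReal_ofReal hD.le, ENNReal.coe_toReal, coe_nnnorm] at h2
  -- converse bounds
  have m1_le_of : ∀ (h : E → ℂ) (K : ℝ), 0 ≤ K →
      (∀ x y : E, ‖h x - h y‖ ≤ K * (Real.sqrt (dist x y) * pl x * pl y)) →
      m1 h ≤ ENNReal.ofReal K := by
    intro h K hK hb
    rw [hm1]
    refine iSup₂_le fun x y => ?_
    apply ENNReal.div_le_of_le_mul
    rw [← enorm_eq_nnnorm, ← ofReal_norm, ← ENNReal.ofReal_mul hK]
    exact ENNReal.ofReal_le_ofReal (hb x y)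
  have i1_le_of : ∀ (h : E → ℂ) (K : ℝ), 0 ≤ K →
      (∀ x : E, ‖h x‖ ≤ K * pl x ^ 2) → i1 h ≤ ENNReal.ofReal K := by
    intro h K hK hb
    rw [hi1]
    refine iSup_le fun x => ?_
    apply ENNReal.div_le_of_le_mul
    rw [← enorm_eq_nnnorm, ← ofReal_norm, ← ENNReal.ofReal_mul hK]
    exact ENNReal.ofReal_le_ofReal (hb x)
  -- continuity of functions with finite `m1`
  have plc : Continuous pl := by
    have : pl = fun z => 1 + lam * Real.sqrt (dist z x₀) := funext hpl
    rw [this]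
    exact continuous_const.add (continuous_const.mul
      (Real.continuous_sqrt.comp (continuous_id.dist continuous_const)))
  have hcont : ∀ h : E → ℂ, m1 h ≠ ⊤ → Continuous h := by
    intro h hfin
    rw [continuous_iff_continuousAt]
    intro x
    have hb : ∀ y, ‖h y - h x‖ ≤ (m1 h).toReal * (Real.sqrt (dist y x) * pl y * pl x) :=
      fun y => hm1le h hfin y x
    have hT : Filter.Tendsto (fun y => (m1 h).toReal * (Real.sqrt (dist y x) * pl y * pl x))
        (nhds x) (nhds 0) := by
      have h5 : Filter.Tendsto (fun y => (m1 h).toReal * (Real.sqrt (dist y x) * pl y * pl x))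
          (nhds x) (nhds ((m1 h).toReal * (Real.sqrt (dist x x) * pl x * pl x))) := by
        apply Filter.Tendsto.const_mul
        exact (((Real.continuous_sqrt.comp (continuous_id.dist continuous_const)).mul plc).mul
          continuous_const).tendsto x
      simpa [dist_self] using h5
    have h0 : Filter.Tendsto (fun y => h y - h x) (nhds x) (nhds 0) := squeeze_zero_norm hb hT
    have h2 : Filter.Tendsto (fun y => h y - h x + h x) (nhds x) (nhds (0 + h x)) :=
      h0.add tendsto_const_nhds
    simpa [ContinuousAt] using h2
  -- finiteness of νn
  have hνfin : ∀ h : E → ℂ, i1 h ≠ ⊤ → νn h ≠ ⊤ := by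
    intro h hfin
    rw [hνn]
    have hb : ∀ x, (‖h x‖₊ : ℝ≥0∞)
        ≤ ENNReal.ofReal ((i1 h).toReal) * ENNReal.ofReal (pl x ^ 2) := by
      intro x
      rw [← enorm_eq_nnnorm, ← ofReal_norm, ← ENNReal.ofReal_mul ENNReal.toReal_nonneg]
      exact ENNReal.ofReal_le_ofReal (hi1le h hfin x)
    have h1 : (∫⁻ x, ‖h x‖₊ ∂ν)
        ≤ ENNReal.ofReal ((i1 h).toReal) * ∫⁻ x, ENNReal.ofReal (pl x ^ 2) ∂ν := by
      rw [← lintegral_const_mul' _ _ ENNReal.ofReal_ne_top]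
      exact lintegral_mono hb
    have h2 : (∫⁻ x, ENNReal.ofReal (pl x ^ 2) ∂ν) < ⊤ := by
      have : (fun x : E => ENNReal.ofReal (pl x ^ 2)) = fun x => (‖pl x ^ 2‖₊ : ℝ≥0∞) := by
        funext x
        rw [← enorm_eq_nnnorm, ← ofReal_norm, Real.norm_of_nonneg (sq_nonneg _)]
      rw [this]
      exact hνpl.2
    exact ne_top_of_le_ne_top (ENNReal.mul_ne_top ENNReal.ofReal_ne_top h2.ne) h1
  -- the exponential factor has norm one
  have hnormexp : ∀ (a b : ℝ) (z : ℂ), ‖Complex.exp (Complex.I * a * b) * z‖ = ‖z‖ := by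
    intro a b z
    rw [norm_mul]
    have : Complex.I * (a:ℂ) * (b:ℂ) = ((a*b : ℝ) : ℂ) * Complex.I := by push_cast; ring
    rw [this, Complex.norm_exp_ofReal_mul_I, one_mul]
  -- integrability of the integrand defining Qt
  have hξcont : Continuous ξ := by
    have hL : LipschitzWith (Real.toNNReal C) ξ := by
      apply LipschitzWith.of_dist_le_mul
      intro x y
      rw [Real.dist_eq, Real.coe_toNNReal C hC]
      exact hξLip x y
    exact hL.continuous
  have hQint : ∀ (t : ℝ) (h : E → ℂ), Continuous h → i1 h ≠ ⊤ → ∀ x : E,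
      Integrable (fun g => Complex.exp (Complex.I * t * ξ (act g x)) * h (act g x)) π := by
    intro t h hc hfin x
    have hφ : Measurable fun g => act g x := hmact x
    have hmeas : AEStronglyMeasurable
        (fun g => Complex.exp (Complex.I * t * ξ (act g x)) * h (act g x)) π := by
      apply Measurable.aestronglyMeasurable
      apply Measurable.mul
      · apply Complex.measurable_exp.comp
        exact measurable_const.mul (Complex.measurable_ofReal.comp (hξcont.measurable.comp hφ))
      · exact hc.measurable.comp hφ
    refine Integrable.mono' (hBint.const_mul ((i1 h).toReal * pl x ^ 2)) hmeas
      (Filter.Eventually.of_forall fun g => ?_)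
    simp only [hnormexp]
    calc ‖h (act g x)‖ ≤ (i1 h).toReal * pl (act g x) ^ 2 := hi1le h hfin _
      _ ≤ (i1 h).toReal * (δ g * pl x) ^ 2 := by
          exact mul_le_mul_of_nonneg_left
            (pow_le_pow_left₀ (hpl0 _).le (hplδ g x) 2) ENNReal.toReal_nonneg
      _ = (i1 h).toReal * pl x ^ 2 * δ g ^ 2 := by ring
  -- one-step bound for νn
  have hνstep : ∀ (t : ℝ) (h : E → ℂ), Continuous h → νn (Qt t h) ≤ νn h := by
    intro t h hc
    have hmf : Measurable fun y : E => (‖h y‖₊ : ℝ≥0∞) := hc.measurable.nnnorm.coe_nnreal_ennreal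
    have hκmeas : Measurable fun x : E => π.map fun g => act g x := by
      apply Measure.measurable_of_measurable_coe
      intro s hs
      have h1 : ∀ x : E, (π.map fun g => act g x) s
          = π ((fun g => (g, x)) ⁻¹' ((fun p : G × E => act p.1 p.2) ⁻¹' s)) := by
        intro x
        rw [Measure.map_apply (hmact x) hs]
        rfl
      simp_rw [h1]
      exact measurable_measure_prodMk_right (hact hs)
    have key : ∀ x : E, (‖Qt t h x‖₊ : ℝ≥0∞) ≤ ∫⁻ g, (‖h (act g x)‖₊ : ℝ≥0∞) ∂π := by
      intro x
      rw [hQt]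
      refine le_trans (enorm_integral_le_lintegral_enorm _) (le_of_eq ?_)
      apply lintegral_congr
      intro g
      rw [← enorm_eq_nnnorm, ← ofReal_norm, ← ofReal_norm, hnormexp t (ξ (act g x)) (h (act g x))]
    rw [hνn, hνn]
    calc ∫⁻ x, ‖Qt t h x‖₊ ∂ν ≤ ∫⁻ x, ∫⁻ g, (‖h (act g x)‖₊ : ℝ≥0∞) ∂π ∂ν :=
          lintegral_mono key
      _ = ∫⁻ x, ∫⁻ y, (‖h y‖₊ : ℝ≥0∞) ∂(π.map fun g => act g x) ∂ν := by
          apply lintegral_congr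
          intro x
          rw [lintegral_map hmf (hmact x)]
      _ = ∫⁻ y, (‖h y‖₊ : ℝ≥0∞) ∂(ν.bind fun x => π.map fun g => act g x) :=
          (Measure.lintegral_bind hκmeas.aemeasurable hmf.aemeasurable).symm
      _ = ∫⁻ y, (‖h y‖₊ : ℝ≥0∞) ∂ν := by rw [hinv]
  -- one-step bound for i1
  have hB0 : 0 ≤ B := integral_nonneg fun g => sq_nonneg _
  have hi1step : ∀ (t : ℝ) (h : E → ℂ), Continuous h → i1 h ≠ ⊤ →
      i1 (Qt t h) ≤ ENNReal.ofReal B * i1 h := by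
    intro t h hc hfin
    have hpt : ∀ x, ‖Qt t h x‖ ≤ (i1 h).toReal * B * pl x ^ 2 := by
      intro x
      rw [hQt]
      calc ‖∫ g, Complex.exp (Complex.I * t * ξ (act g x)) * h (act g x) ∂π‖
          ≤ ∫ g, ‖Complex.exp (Complex.I * t * ξ (act g x)) * h (act g x)‖ ∂π :=
            norm_integral_le_integral_norm _
        _ ≤ ∫ g, (i1 h).toReal * pl x ^ 2 * δ g ^ 2 ∂π := by
            apply integral_mono_of_nonneg (Filter.Eventually.of_forall fun g => norm_nonneg _)
              (hBint.const_mul _) (Filter.Eventually.of_forall fun g => ?_)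
            simp only [hnormexp]
            calc ‖h (act g x)‖ ≤ (i1 h).toReal * pl (act g x) ^ 2 := hi1le h hfin _
              _ ≤ (i1 h).toReal * (δ g * pl x) ^ 2 :=
                  mul_le_mul_of_nonneg_left
                    (pow_le_pow_left₀ (hpl0 _).le (hplδ g x) 2) ENNReal.toReal_nonneg
              _ = (i1 h).toReal * pl x ^ 2 * δ g ^ 2 := by ring
        _ = (i1 h).toReal * B * pl x ^ 2 := by rw [integral_const_mul, ← hB]; ring
    refine le_trans (i1_le_of (Qt t h) _ (mul_nonneg ENNReal.toReal_nonneg hB0) hpt) ?_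
    rw [ENNReal.ofReal_mul ENNReal.toReal_nonneg, ENNReal.ofReal_toReal hfin]
    exact le_of_eq (mul_comm _ _)
  -- one-step bound for m1
  have hm1step : ∀ t : ℝ, |t| ≤ t₀ → ∀ h : E → ℂ, Continuous h → m1 h ≠ ⊤ → i1 h ≠ ⊤ →
      m1 (Qt t h) ≤ ENNReal.ofReal A * m1 h + ENNReal.ofReal (A * ε₀) * i1 h := by
    intro t ht h hc hmfin hifin
    have hM0 : 0 ≤ (m1 h).toReal := ENNReal.toReal_nonneg
    have hI0 : 0 ≤ (i1 h).toReal := ENNReal.toReal_nonneg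
    have hAε : 0 ≤ A * ε₀ := mul_nonneg hA0 hε₀pos.le
    have hK0 : 0 ≤ ((m1 h).toReal + ε₀ * (i1 h).toReal) * A :=
      mul_nonneg (add_nonneg hM0 (mul_nonneg hε₀pos.le hI0)) hA0
    have hpt : ∀ x y : E, ‖Qt t h x - Qt t h y‖
        ≤ ((m1 h).toReal + ε₀ * (i1 h).toReal) * A * (Real.sqrt (dist x y) * pl x * pl y) := by
      intro x y
      rw [hQt, hQt, ← integral_sub (hQint t h hc hifin x) (hQint t h hc hifin y)]
      calc ‖∫ g, (Complex.exp (Complex.I * t * ξ (act g x)) * h (act g x)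
              - Complex.exp (Complex.I * t * ξ (act g y)) * h (act g y)) ∂π‖
          ≤ ∫ g, ‖Complex.exp (Complex.I * t * ξ (act g x)) * h (act g x)
              - Complex.exp (Complex.I * t * ξ (act g y)) * h (act g y)‖ ∂π :=
            norm_integral_le_integral_norm _
        _ ≤ ∫ g, (((m1 h).toReal + ε₀ * (i1 h).toReal)
              * (Real.sqrt (dist x y) * pl x * pl y)) * (Real.sqrt (c g) * δ g ^ 2) ∂π := by
            apply integral_mono_of_nonneg (Filter.Eventually.of_forall fun g => norm_nonneg _)
              (hAint.const_mul _) (Filter.Eventually.of_forall fun g => ?_)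
            have hcast : ∀ r : ℝ, Complex.I * (t:ℂ) * (r:ℂ) = Complex.I * ((t*r : ℝ) : ℂ) := by
              intro r; push_cast; ring
            show ‖Complex.exp (Complex.I * t * ξ (act g x)) * h (act g x)
              - Complex.exp (Complex.I * t * ξ (act g y)) * h (act g y)‖ ≤ _
            rw [hcast (ξ (act g x)), hcast (ξ (act g y))]
            refine le_trans (exp_mul_diff_le _ _ _ _) ?_
            have hsd : 0 ≤ Real.sqrt (dist x y) := Real.sqrt_nonneg _
            have hsc : 0 ≤ Real.sqrt (c g) := Real.sqrt_nonneg _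
            have f1 : Real.sqrt (dist (act g x) (act g y))
                ≤ Real.sqrt (c g) * Real.sqrt (dist x y) := by
              refine le_trans (Real.sqrt_le_sqrt (hcLip g x y)) (le_of_eq ?_)
              rw [Real.sqrt_mul (hc0 g)]
            have e1 : ‖h (act g x) - h (act g y)‖ ≤ (m1 h).toReal
                * ((Real.sqrt (c g) * Real.sqrt (dist x y)) * (δ g * pl x) * (δ g * pl y)) := by
              refine le_trans (hm1le h hmfin _ _) ?_
              gcongr
              all_goals first
                | exact f1
                | exact hplδ g x
                | exact hplδ g y
                | exact (hpl0 _).le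
                | exact Real.sqrt_nonneg _
                | exact mul_nonneg (mul_nonneg hsc hsd) (mul_nonneg (hδ0 g) (hpl0 x).le)
                | positivity
            have e2 : min ‖h (act g x)‖ ‖h (act g y)‖
                ≤ (i1 h).toReal * δ g ^ 2 * (pl x * pl y) := by
              rcases le_total (pl x) (pl y) with hp | hp
              · calc min ‖h (act g x)‖ ‖h (act g y)‖ ≤ ‖h (act g x)‖ := min_le_left _ _
                  _ ≤ (i1 h).toReal * pl (act g x) ^ 2 := hi1le h hifin _
                  _ ≤ (i1 h).toReal * (δ g * pl x) ^ 2 :=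
                      mul_le_mul_of_nonneg_left
                        (pow_le_pow_left₀ (hpl0 _).le (hplδ g x) 2) hI0
                  _ ≤ (i1 h).toReal * δ g ^ 2 * (pl x * pl y) := by
                      nlinarith [mul_nonneg hI0 (sq_nonneg (δ g)),
                        mul_le_mul_of_nonneg_left hp (hpl0 x).le]
              · calc min ‖h (act g x)‖ ‖h (act g y)‖ ≤ ‖h (act g y)‖ := min_le_right _ _
                  _ ≤ (i1 h).toReal * pl (act g y) ^ 2 := hi1le h hifin _
                  _ ≤ (i1 h).toReal * (δ g * pl y) ^ 2 :=
                      mul_le_mul_of_nonneg_left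
                        (pow_le_pow_left₀ (hpl0 _).le (hplδ g y) 2) hI0
                  _ ≤ (i1 h).toReal * δ g ^ 2 * (pl x * pl y) := by
                      nlinarith [mul_nonneg hI0 (sq_nonneg (δ g)),
                        mul_le_mul_of_nonneg_left hp (hpl0 y).le]
            have e3 : 2 * Real.sqrt |t * ξ (act g x) - t * ξ (act g y)|
                ≤ ε₀ * (Real.sqrt (c g) * Real.sqrt (dist x y)) := by
              have hd1 : |t * ξ (act g x) - t * ξ (act g y)|
                  ≤ t₀ * ((C+1) * (c g * dist x y)) := by
                rw [← mul_sub, abs_mul]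
                apply mul_le_mul ht ?_ (abs_nonneg _) ht₀pos.le
                calc |ξ (act g x) - ξ (act g y)| ≤ C * dist (act g x) (act g y) := hξLip _ _
                  _ ≤ (C+1) * (c g * dist x y) := by
                      nlinarith [hcLip g x y, dist_nonneg (x := act g x) (y := act g y),
                        mul_nonneg (hc0 g) (dist_nonneg (x := x) (y := y))]
              have hsq : Real.sqrt (t₀ * ((C+1) * (c g * dist x y)))
                  = (ε₀/2) * (Real.sqrt (c g) * Real.sqrt (dist x y)) := by
                rw [show t₀ * ((C+1) * (c g * dist x y)) = (t₀ * (C+1)) * (c g * dist x y)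
                  by ring]
                rw [Real.sqrt_mul (by positivity), Real.sqrt_mul (hc0 g)]
                have ht0e : Real.sqrt (t₀ * (C+1)) = ε₀ / 2 := by
                  rw [ht₀, show ε₀ ^ 2 / (4*(C+1)) * (C+1) = (ε₀/2)^2 by field_simp; ring]
                  exact Real.sqrt_sq (by positivity)
                rw [ht0e]
              calc 2 * Real.sqrt |t * ξ (act g x) - t * ξ (act g y)|
                  ≤ 2 * Real.sqrt (t₀ * ((C+1) * (c g * dist x y))) := by
                    have := Real.sqrt_le_sqrt hd1
                    linarith
                _ = ε₀ * (Real.sqrt (c g) * Real.sqrt (dist x y)) := by rw [hsq]; ring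
            calc ‖h (act g x) - h (act g y)‖ + 2 * Real.sqrt |t * ξ (act g x) - t * ξ (act g y)|
                  * min ‖h (act g x)‖ ‖h (act g y)‖
                ≤ (m1 h).toReal
                    * ((Real.sqrt (c g) * Real.sqrt (dist x y)) * (δ g * pl x) * (δ g * pl y))
                  + (ε₀ * (Real.sqrt (c g) * Real.sqrt (dist x y)))
                    * ((i1 h).toReal * δ g ^ 2 * (pl x * pl y)) := by
                  refine add_le_add e1 (mul_le_mul e3 e2
                    (le_min (norm_nonneg _) (norm_nonneg _)) ?_)
                  exact mul_nonneg hε₀pos.le (mul_nonneg hsc hsd)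
              _ = (((m1 h).toReal + ε₀ * (i1 h).toReal)
                    * (Real.sqrt (dist x y) * pl x * pl y)) * (Real.sqrt (c g) * δ g ^ 2) := by
                  ring
        _ = ((m1 h).toReal + ε₀ * (i1 h).toReal) * A
              * (Real.sqrt (dist x y) * pl x * pl y) := by
            rw [integral_const_mul, ← hA]; ring
    refine le_trans (m1_le_of _ _ hK0 hpt) (le_of_eq ?_)
    rw [show ((m1 h).toReal + ε₀ * (i1 h).toReal) * A
        = A * (m1 h).toReal + (A * ε₀) * (i1 h).toReal by ring,
      ENNReal.ofReal_add (mul_nonneg hA0 hM0) (mul_nonneg hAε hI0),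
      ENNReal.ofReal_mul hA0, ENNReal.ofReal_mul hAε,
      ENNReal.ofReal_toReal hmfin, ENNReal.ofReal_toReal hifin]
  -- combined one-step bound
  have hstep : ∀ t : ℝ, |t| ≤ t₀ → ∀ h : E → ℂ, m1 h ≠ ⊤ → i1 h ≠ ⊤ →
      m1 (Qt t h) ≤ ENNReal.ofReal κ * (m1 h + νn h) := by
    intro t ht h hmfin hifin
    have hAε : 0 ≤ A * ε₀ := mul_nonneg hA0 hε₀pos.le
    have hi1b : ENNReal.ofReal (A * ε₀) * i1 h
        ≤ ENNReal.ofReal (A * ε₀ / c₁) * (m1 h + νn h) := by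
      have h1 : ENNReal.ofReal c₁ * i1 h ≤ m1 h + νn h :=
        le_trans (mul_le_mul_right le_add_self _) (hEq h hmfin hifin).1
      calc ENNReal.ofReal (A * ε₀) * i1 h
          = ENNReal.ofReal (A * ε₀ / c₁) * (ENNReal.ofReal c₁ * i1 h) := by
            rw [← mul_assoc, ← ENNReal.ofReal_mul (by positivity)]
            congr 1
            rw [div_mul_cancel₀ _ hc₁.ne']
        _ ≤ _ := mul_le_mul_right h1 _
    calc m1 (Qt t h)
        ≤ ENNReal.ofReal A * m1 h + ENNReal.ofReal (A * ε₀) * i1 h :=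
          hm1step t ht h (hcont h hmfin) hmfin hifin
      _ ≤ ENNReal.ofReal A * (m1 h + νn h) + ENNReal.ofReal (A * ε₀ / c₁) * (m1 h + νn h) :=
          add_le_add (mul_le_mul_right le_self_add _) hi1b
      _ = ENNReal.ofReal (A + A * ε₀ / c₁) * (m1 h + νn h) := by
          rw [ENNReal.ofReal_add hA0 (by positivity), add_mul]
      _ ≤ ENNReal.ofReal κ * (m1 h + νn h) := by
          apply mul_le_mul_left
          apply ENNReal.ofReal_le_ofReal
          have hY : (0:ℝ) < 2 * (A + 1) := by linarith
          have he : A * ε₀ / c₁ = A * (1 - A) / (2 * (A + 1)) := by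
            rw [hε₀]; field_simp
          rw [he, hκ, ← sub_nonneg,
            show (1 + A) / 2 - (A + A * (1 - A) / (2 * (A + 1))) = (1 - A) / (2 * (A + 1)) by
              field_simp; ring]
          exact div_nonneg (by linarith) hY.le
  -- the induction
  have main : ∀ t : ℝ, |t| ≤ t₀ → ∀ f : E → ℂ, m1 f ≠ ⊤ → i1 f ≠ ⊤ → ∀ n : ℕ,
      m1 ((Qt t)^[n] f) ≠ ⊤ ∧ i1 ((Qt t)^[n] f) ≠ ⊤ ∧ νn ((Qt t)^[n] f) ≤ νn f ∧
      m1 ((Qt t)^[n] f) ≤ ENNReal.ofReal κ ^ n * m1 f + ENNReal.ofReal C₂ * νn f := by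
    intro t ht f hmfin hifin n
    induction n with
    | zero =>
      refine ⟨hmfin, hifin, le_rfl, ?_⟩
      simpa using le_self_add
    | succ n ih =>
      obtain ⟨ihm, ihi, ihν, ihb⟩ := ih
      have hcont' := hcont _ ihm
      rw [Function.iterate_succ_apply']
      have hb : m1 (Qt t ((Qt t)^[n] f))
          ≤ ENNReal.ofReal κ ^ (n+1) * m1 f + ENNReal.ofReal C₂ * νn f := by
        calc m1 (Qt t ((Qt t)^[n] f))
            ≤ ENNReal.ofReal κ * (m1 ((Qt t)^[n] f) + νn ((Qt t)^[n] f)) := hstep t ht _ ihm ihi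
          _ ≤ ENNReal.ofReal κ * ((ENNReal.ofReal κ ^ n * m1 f + ENNReal.ofReal C₂ * νn f)
                + νn f) := mul_le_mul_right (add_le_add ihb ihν) _
          _ = ENNReal.ofReal κ ^ (n+1) * m1 f
              + (ENNReal.ofReal κ * ENNReal.ofReal C₂ + ENNReal.ofReal κ) * νn f := by ring
          _ = ENNReal.ofReal κ ^ (n+1) * m1 f + ENNReal.ofReal C₂ * νn f := by
              congr 2
              rw [← ENNReal.ofReal_mul hκ0, ← ENNReal.ofReal_add (mul_nonneg hκ0 hC₂0) hκ0]
              congr 1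
              have h1κ : (1:ℝ) - κ ≠ 0 := ne_of_gt (by linarith)
              rw [hC₂]
              field_simp
              ring
      have hνb : νn (Qt t ((Qt t)^[n] f)) ≤ νn f := le_trans (hνstep t _ hcont') ihν
      refine ⟨?_, ?_, hνb, hb⟩
      · refine ne_top_of_le_ne_top ?_ hb
        apply ENNReal.add_ne_top.2
        exact ⟨ENNReal.mul_ne_top (ENNReal.pow_ne_top ENNReal.ofReal_ne_top) hmfin,
          ENNReal.mul_ne_top ENNReal.ofReal_ne_top (hνfin f hifin)⟩
      · exact ne_top_of_le_ne_top (ENNReal.mul_ne_top ENNReal.ofReal_ne_top ihi)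
          (hi1step t _ hcont' ihi)
  intro t ht n hn f hm hi
  obtain ⟨h1, h2, h3, h4⟩ := main t ht f hm hi n
  calc m1 ((Qt t)^[n] f) + νn ((Qt t)^[n] f)
      ≤ (ENNReal.ofReal κ ^ n * m1 f + ENNReal.ofReal C₂ * νn f) + νn f := add_le_add h4 h3
    _ ≤ ENNReal.ofReal κ ^ n * (m1 f + νn f) + ENNReal.ofReal (C₂ + 1) * νn f := by
        rw [ENNReal.ofReal_add hC₂0 zero_le_one, ENNReal.ofReal_one, mul_add, add_mul, one_mul,
          add_assoc]
        exact add_le_add (self_le_add_right _ _) le_rfl
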